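/- Let S = (V, E, F) be a connected SR-graph (so V is finite and nonempty and S, viewed as the graph (V, E ∪ F), is connected) such that every connected component of H = (V, F) is complete. Then S has an SR-cycle if and only if c(G) + c(H) < |V| + 1, where G = (V, E). -/

import Mathlib

universe u

/-- The SR-graph `(V, E, F)` has an SR-cycle: an (even) cycle
`v₁, w₁, v₂, w₂, …, v_s, w_s` on `2s ≥ 4` pairwise distinct vertices whose edges
`vᵢwᵢ` lie in `E` and whose edges `wᵢvᵢ₊₁` (indices mod `s`) lie in `F`. -/
def HasSRCycle {V : Type*} (E F : SimpleGraph V) : Prop :=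
  ∃ (s : ℕ) (hs : 2 ≤ s) (v w : Fin s → V),
    Function.Injective (fun p : Fin s × Bool => if p.2 then v p.1 else w p.1) ∧
    (∀ i : Fin s, E.Adj (v i) (w i)) ∧
    (∀ i : Fin s, F.Adj (w i) (v ⟨((i : ℕ) + 1) % s, Nat.mod_lt _ (by omega)⟩))

open SimpleGraph

section SRAux

variable {V : Type u}

/-- The bipartite "component graph" of the SR-graph `(V, E, F)`. -/
private def BG (E F : SimpleGraph V) :
    SimpleGraph (E.ConnectedComponent ⊕ F.ConnectedComponent) where
  Adj x y :=
    (∃ u : V, x = .inl (E.connectedComponentMk u) ∧ y = .inr (F.connectedComponentMk u)) ∨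
    (∃ u : V, y = .inl (E.connectedComponentMk u) ∧ x = .inr (F.connectedComponentMk u))
  symm := by constructor; rintro x y (h | h); exacts [Or.inr h, Or.inl h]
  loopless := by constructor; rintro x (⟨u, h1, h2⟩ | ⟨u, h1, h2⟩) <;> (subst h1; simp at h2)

private lemma BG_adj_base (E F : SimpleGraph V) (u : V) :
    (BG E F).Adj (.inl (E.connectedComponentMk u)) (.inr (F.connectedComponentMk u)) :=
  Or.inl ⟨u, rfl, rfl⟩

private lemma BG_connected {E F : SimpleGraph V} (hconn : (E ⊔ F).Connected) :
    (BG E F).Connected := by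
  have hne : Nonempty V := hconn.nonempty
  have main : ∀ a b : V, (BG E F).Reachable
      (.inl (E.connectedComponentMk a)) (.inl (E.connectedComponentMk b)) := by
    intro a b
    obtain ⟨p⟩ := hconn a b
    induction p with
    | nil => exact Reachable.refl _
    | @cons u x _ ha q ih =>
      rcases ha with ha | ha
      · rwa [ConnectedComponent.sound ha.reachable]
      · refine Reachable.trans ?_ ih
        refine Reachable.trans (Adj.reachable (BG_adj_base E F u)) ?_
        rw [ConnectedComponent.sound ha.reachable]
        exact (Adj.reachable (BG_adj_base E F x)).symm
  haveI : Nonempty (E.ConnectedComponent ⊕ F.ConnectedComponent) :=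
    ⟨.inl (E.connectedComponentMk (Classical.arbitrary V))⟩
  refine ⟨?_⟩
  intro x y
  have aux : ∀ z : E.ConnectedComponent ⊕ F.ConnectedComponent, ∃ a : V,
      (BG E F).Reachable z (.inl (E.connectedComponentMk a)) := by
    rintro (c | c)
    · obtain ⟨a, rfl⟩ := c.exists_rep
      exact ⟨a, Reachable.refl _⟩
    · obtain ⟨a, rfl⟩ := c.exists_rep
      exact ⟨a, (Adj.reachable (BG_adj_base E F a)).symm⟩
  obtain ⟨a, hza⟩ := aux x
  obtain ⟨b, hzb⟩ := aux y
  exact (hza.trans (main a b)).trans hzb.symm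

/-- The edge set of `BG E F` is in bijection with `V`. -/
private lemma BG_card_edges {E F : SimpleGraph V}
    (hdisj : ∀ v w : V, ¬(E.Adj v w ∧ F.Adj v w))
    (hE : ∀ v w : V, E.Reachable v w → v ≠ w → E.Adj v w)
    (hF : ∀ v w : V, F.Reachable v w → v ≠ w → F.Adj v w) :
    Nat.card (BG E F).edgeSet = Nat.card V := by
  have key_inj : ∀ a b : V, E.connectedComponentMk a = E.connectedComponentMk b →
      F.connectedComponentMk a = F.connectedComponentMk b → a = b := by
    intro a b hg hh
    by_contra hne
    exact hdisj a b ⟨hE a b (ConnectedComponent.exact hg) hne,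
      hF a b (ConnectedComponent.exact hh) hne⟩
  symm
  apply Nat.card_eq_of_bijective
    (fun u => (⟨s(.inl (E.connectedComponentMk u), .inr (F.connectedComponentMk u)),
      BG_adj_base E F u⟩ : (BG E F).edgeSet))
  constructor
  · intro a b hab
    replace hab := Sym2.eq_iff.mp (congrArg Subtype.val hab)
    rcases hab with ⟨h1, h2⟩ | ⟨h1, h2⟩
    · exact key_inj a b (by injection h1) (by injection h2)
    · exact absurd h1 (by simp)
  · rintro ⟨e, he⟩
    induction e with
    | h x y =>
      rw [mem_edgeSet] at he
      rcases he with ⟨u, hx, hy⟩ | ⟨u, hy, hx⟩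
      · exact ⟨u, Subtype.ext (show s(_,_) = s(x,y) by rw [hx, hy])⟩
      · exact ⟨u, Subtype.ext (show s(_,_) = s(x,y) by rw [hx, hy]; exact Sym2.eq_swap)⟩

/-- A connected finite graph has at least `|W| - 1` edges. -/
private lemma card_le_of_connected {W : Type*} [Finite W] (B : SimpleGraph W)
    (h : B.Connected) : Nat.card W ≤ Nat.card B.edgeSet + 1 := by
  classical
  have : Nonempty W := h.nonempty
  cases nonempty_fintype W
  obtain ⟨root⟩ := ‹Nonempty W›
  have hstep : ∀ w : W, ∃ y : W, w ≠ root → B.Adj w y ∧ B.dist y root < B.dist w root := by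
    intro w
    by_cases hw : w = root
    · exact ⟨root, fun h' => absurd hw h'⟩
    · obtain ⟨p, hp⟩ := h.exists_walk_length_eq_dist w root
      cases p with
      | nil => exact absurd rfl hw
      | @cons _ y _ ha q =>
        refine ⟨y, fun _ => ⟨ha, ?_⟩⟩
        have h1 : B.dist y root ≤ q.length := dist_le q
        have h2 : 0 < B.dist w root := h.pos_dist_of_ne hw
        simp only [Walk.length_cons] at hp
        omega
  choose nxt hnxt using hstep
  set f : {w : W // w ≠ root} → B.edgeSet :=
    fun w => ⟨s(w.1, nxt w.1), (hnxt w.1 w.2).1⟩ with hf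
  have hfi : Function.Injective f := by
    rintro ⟨a, ha⟩ ⟨b, hb⟩ hab
    replace hab := Sym2.eq_iff.mp (congrArg Subtype.val hab); dsimp only at hab
    rcases hab with ⟨h1, _⟩ | ⟨h1, h2⟩
    · exact Subtype.ext h1
    · exfalso
      have d1 := (hnxt a ha).2
      have d2 := (hnxt b hb).2
      rw [h2] at d1; rw [← h1] at d2
      omega
  have := Fintype.card_le_of_injective f hfi
  have hc : Fintype.card {w : W // w ≠ root} = Fintype.card W - 1 := by
    rw [Fintype.card_subtype_compl, Fintype.card_subtype_eq]
  have hpos : 0 < Fintype.card W := Fintype.card_pos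
  have hce : Nat.card B.edgeSet = Fintype.card B.edgeSet := Nat.card_eq_fintype_card
  have hcw : Nat.card W = Fintype.card W := Nat.card_eq_fintype_card
  omega

private lemma tree_card {W : Type*} [Finite W] (B : SimpleGraph W) (h : B.IsTree) :
    Nat.card B.edgeSet + 1 = Nat.card W := by
  classical
  cases nonempty_fintype W
  have := h.card_edgeFinset
  rwa [edgeFinset_card, ← Nat.card_eq_fintype_card, ← Nat.card_eq_fintype_card] at this

private lemma connected_delete {W : Type*} (B : SimpleGraph W) {x0 y0 : W} (hB : B.Connected)
    (hr : (B \ fromEdgeSet {s(x0, y0)}).Reachable x0 y0) :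
    (B \ fromEdgeSet {s(x0, y0)}).Connected := by
  haveI : Nonempty W := hB.nonempty
  refine ⟨fun a b => ?_⟩
  obtain ⟨p⟩ := hB a b
  induction p with
  | nil => exact Reachable.refl _
  | @cons u x _ ha q ih =>
    refine Reachable.trans ?_ ih
    by_cases h : s(u, x) = s(x0, y0)
    · rw [Sym2.eq_iff] at h
      rcases h with ⟨rfl, rfl⟩ | ⟨rfl, rfl⟩
      · exact hr
      · exact hr.symm
    · exact Adj.reachable (by simp [sdiff_adj, fromEdgeSet_adj, ha, h])

section fwd

variable {E F : SimpleGraph V}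
  (hdisj : ∀ v w : V, ¬(E.Adj v w ∧ F.Adj v w))
  (hE : ∀ v w : V, E.Reachable v w → v ≠ w → E.Adj v w)
  (hF : ∀ v w : V, F.Reachable v w → v ≠ w → F.Adj v w)

include hdisj hE hF in
private lemma fwd_reachable {s : ℕ} (hs : 2 ≤ s) (v w : Fin s → V)
    (inj : Function.Injective (fun p : Fin s × Bool => if p.2 then v p.1 else w p.1))
    (hEvw : ∀ i : Fin s, E.Adj (v i) (w i))
    (hFwv : ∀ i : Fin s, F.Adj (w i) (v ⟨((i : ℕ) + 1) % s, Nat.mod_lt _ (by omega)⟩))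
    (i0 : Fin s) (hi0 : (i0 : ℕ) = 0) :
    ((BG E F) \ fromEdgeSet
        {s(.inl (E.connectedComponentMk (v i0)), .inr (F.connectedComponentMk (v i0)))}).Reachable
      (.inl (E.connectedComponentMk (v i0))) (.inr (F.connectedComponentMk (v i0))) := by
  set B' := (BG E F) \ fromEdgeSet
      {s(.inl (E.connectedComponentMk (v i0)), .inr (F.connectedComponentMk (v i0)))} with hB'
  have key_inj : ∀ a b : V, E.connectedComponentMk a = E.connectedComponentMk b →
      F.connectedComponentMk a = F.connectedComponentMk b → a = b := by
    intro a b hg hh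
    by_contra hne
    exact hdisj a b ⟨hE a b (ConnectedComponent.exact hg) hne,
      hF a b (ConnectedComponent.exact hh) hne⟩
  have badj : ∀ u : V, u ≠ v i0 →
      B'.Adj (.inl (E.connectedComponentMk u)) (.inr (F.connectedComponentMk u)) := by
    intro u hu
    refine ⟨BG_adj_base E F u, ?_⟩
    rw [fromEdgeSet_adj]
    rintro ⟨hmem, -⟩
    rw [Set.mem_singleton_iff, Sym2.eq_iff] at hmem
    rcases hmem with ⟨h1, h2⟩ | ⟨h1, h2⟩
    · exact hu (key_inj _ _ (by injection h1) (by injection h2))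
    · exact absurd h1 (by simp)
  have hvne : ∀ j : Fin s, j ≠ i0 → v j ≠ v i0 := by
    intro j hj hcon
    have := inj (a₁ := (j, true)) (a₂ := (i0, true)) (by simpa using hcon)
    exact hj (by simpa using this)
  have hwne : ∀ j : Fin s, w j ≠ v i0 := by
    intro j hcon
    have := inj (a₁ := (j, false)) (a₂ := (i0, true)) (by simpa using hcon)
    simp at this
  have hGeq : ∀ j : Fin s, E.connectedComponentMk (v j) = E.connectedComponentMk (w j) :=
    fun j => ConnectedComponent.sound (hEvw j).reachable
  have hHeq : ∀ j : Fin s, F.connectedComponentMk (w j) =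
      F.connectedComponentMk (v ⟨((j : ℕ) + 1) % s, Nat.mod_lt _ (by omega)⟩) :=
    fun j => ConnectedComponent.sound (hFwv j).reachable
  have main : ∀ k : ℕ, (hk : k < s) →
      B'.Reachable (.inr (F.connectedComponentMk (w ⟨s - 1 - k, by omega⟩)))
        (.inr (F.connectedComponentMk (v i0))) := by
    intro k
    induction k with
    | zero =>
      intro hk
      have h := hHeq ⟨s - 1, by omega⟩
      have hidx : (⟨((s - 1 : ℕ) + 1) % s, Nat.mod_lt _ (by omega)⟩ : Fin s) = i0 := by
        apply Fin.ext
        show (s - 1 + 1) % s = (i0 : ℕ)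
        rw [hi0, Nat.sub_add_cancel (by omega : 1 ≤ s), Nat.mod_self]
      rw [hidx] at h
      rw [show (⟨s - 1 - 0, by omega⟩ : Fin s) = ⟨s - 1, by omega⟩ from rfl, h]
    | succ k ih =>
      intro hk
      have hk' : k < s := by omega
      have hij : (⟨(((⟨s - 1 - (k + 1), by omega⟩ : Fin s) : ℕ) + 1) % s,
          Nat.mod_lt _ (by omega)⟩ : Fin s) = (⟨s - 1 - k, by omega⟩ : Fin s) := by
        apply Fin.ext
        show (s - 1 - (k + 1) + 1) % s = s - 1 - k
        rw [Nat.mod_eq_of_lt (by omega)]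
        omega
      have h1 := hHeq ⟨s - 1 - (k + 1), by omega⟩
      rw [hij] at h1
      set j : Fin s := ⟨s - 1 - k, by omega⟩ with hjdef
      have hj0 : j ≠ i0 := by
        intro hcon
        have h2 : s - 1 - k = (i0 : ℕ) := congrArg Fin.val hcon
        rw [hi0] at h2
        omega
      have a1 : B'.Adj (.inr (F.connectedComponentMk (v j)))
          (.inl (E.connectedComponentMk (v j))) := (badj (v j) (hvne j hj0)).symm
      have a2 : B'.Adj (.inl (E.connectedComponentMk (w j)))
          (.inr (F.connectedComponentMk (w j))) := badj (w j) (hwne j)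
      rw [h1]
      refine (a1.reachable.trans ?_).trans (ih hk')
      rw [hGeq j]
      exact a2.reachable
  have a0 : B'.Adj (.inl (E.connectedComponentMk (w i0)))
      (.inr (F.connectedComponentMk (w i0))) := badj (w i0) (hwne i0)
  have h0 := main (s - 1) (by omega)
  have hidx0 : (⟨s - 1 - (s - 1), by omega⟩ : Fin s) = i0 := by
    apply Fin.ext
    show s - 1 - (s - 1) = (i0 : ℕ)
    rw [hi0]
    omega
  rw [hidx0] at h0
  rw [hGeq i0]
  exact a0.reachable.trans h0

end fwd

private lemma walk_support_getElem {W : Type*} {G : SimpleGraph W} {a b : W} (p : G.Walk a b) :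
    ∀ (i : ℕ) (h : i < p.support.length), p.support[i] = p.getVert i := by
  induction p with
  | nil =>
    intro i h
    simp only [Walk.support_nil, List.length_singleton] at h
    interval_cases i
    simp [Walk.getVert_zero]
  | @cons u x y ha q ih =>
    intro i h
    cases i with
    | zero => simp [Walk.getVert_zero]
    | succ i =>
      simp only [Walk.support_cons, List.getElem_cons_succ, Walk.getVert_cons_succ]
      exact ih i (by simpa [Walk.support_cons] using h)

/-- In a cycle, `getVert` is injective on `[0, length)`. -/
private lemma cycle_getVert_inj {W : Type*} {G : SimpleGraph W} {x : W} {c : G.Walk x x}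
    (hc : c.IsCycle) : ∀ i j, i < c.length → j < c.length →
      c.getVert i = c.getVert j → i = j := by
  have hnd : c.support.tail.Nodup := hc.2
  have hlen : c.support.length = c.length + 1 := Walk.length_support c
  have htl : c.support.tail.length = c.length := by
    rw [List.length_tail, hlen]; omega
  have hget : ∀ (i : ℕ) (h : i < c.length), c.support.tail[i]'(by omega) = c.getVert (i + 1) := by
    intro i h
    rw [List.getElem_tail]
    exact walk_support_getElem c (i + 1) (by omega)
  have inj1 : ∀ i j, 1 ≤ i → i ≤ c.length → 1 ≤ j → j ≤ c.length →
      c.getVert i = c.getVert j → i = j := by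
    intro i j hi1 hi2 hj1 hj2 hij
    have h1 : c.support.tail[i - 1]'(by omega) = c.support.tail[j - 1]'(by omega) := by
      rw [hget (i-1) (by omega), hget (j-1) (by omega),
        Nat.sub_add_cancel hi1, Nat.sub_add_cancel hj1]
      exact hij
    have := (List.Nodup.getElem_inj_iff hnd).mp h1
    omega
  intro i j hi hj hij
  rcases Nat.eq_zero_or_pos i with rfl | hip
  · rcases Nat.eq_zero_or_pos j with rfl | hjp
    · rfl
    · exfalso
      have h0 : c.getVert c.length = c.getVert j := by
        rw [Walk.getVert_length]
        rw [Walk.getVert_zero] at hij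
        exact hij
      have := inj1 c.length j (by have := hc.three_le_length; omega) le_rfl hjp (by omega) h0
      omega
  · rcases Nat.eq_zero_or_pos j with rfl | hjp
    · exfalso
      have h0 : c.getVert i = c.getVert c.length := by
        rw [Walk.getVert_length]
        rw [Walk.getVert_zero] at hij
        exact hij
      have := inj1 i c.length hip (by omega) (by have := hc.three_le_length; omega) le_rfl h0
      omega
    · exact inj1 i j hip (by omega) hjp (by omega) hij

section extract

variable {E F : SimpleGraph V}
  (hE : ∀ v w : V, E.Reachable v w → v ≠ w → E.Adj v w)
  (hF : ∀ v w : V, F.Reachable v w → v ≠ w → F.Adj v w)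

include hE hF in
private lemma extract_SR {c₀ : F.ConnectedComponent} {c : (BG E F).Walk (.inr c₀) (.inr c₀)}
    (hc : c.IsCycle) : HasSRCycle E F := by
  haveI : Nonempty V := by
    obtain ⟨z, -⟩ := c₀.exists_rep
    exact ⟨z⟩
  set n := c.length with hn
  have injA : ∀ i j, i < n → j < n → c.getVert i = c.getVert j → i = j :=
    cycle_getVert_inj hc
  have hn3 : 3 ≤ n := hc.three_le_length
  have a0 : c.getVert 0 = .inr c₀ := Walk.getVert_zero c
  have an : c.getVert n = .inr c₀ := Walk.getVert_length c
  have parity : ∀ i, i ≤ n → ((∃ d, c.getVert i = Sum.inl d) ↔ i % 2 = 1) := by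
    intro i
    induction i with
    | zero =>
      intro _
      rw [a0]
      simp
    | succ i ih =>
      intro hi
      have hadj := c.adj_getVert_succ (by omega : i < c.length)
      have ihh := ih (by omega)
      rcases hadj with ⟨z, h1, h2⟩ | ⟨z, h1, h2⟩
      · have hi1 : i % 2 = 1 := ihh.mp ⟨_, h1⟩
        constructor
        · rintro ⟨d, hd⟩
          rw [h2] at hd
          cases hd
        · intro h
          omega
      · have hi0 : ¬ i % 2 = 1 := fun h => by
          obtain ⟨d, hd⟩ : ∃ d, c.getVert i = Sum.inl d := ihh.mpr h
          rw [h2] at hd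
          cases hd
        exact ⟨fun _ => by omega, fun _ => ⟨_, h1⟩⟩
  have neven : n % 2 = 0 := by
    have h2 := parity n le_rfl
    rw [an] at h2
    have h' : ¬ ∃ d, (Sum.inr c₀ : E.ConnectedComponent ⊕ F.ConnectedComponent) = Sum.inl d := by
      rintro ⟨d, hd⟩; cases hd
    have := (not_iff_not.mpr h2).mp h'
    omega
  obtain ⟨s, hns⟩ : ∃ s, n = 2 * s := ⟨n / 2, by omega⟩
  have hs : 2 ≤ s := by omega
  have hraw : ∀ i : ℕ, ∃ z : V, i < n →
      ((c.getVert i = .inl (E.connectedComponentMk z) ∧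
        c.getVert (i+1) = .inr (F.connectedComponentMk z)) ∨
       (c.getVert (i+1) = .inl (E.connectedComponentMk z) ∧
        c.getVert i = .inr (F.connectedComponentMk z))) := by
    intro i
    by_cases hi : i < n
    · have hadj := c.adj_getVert_succ (hi : i < c.length)
      rcases hadj with ⟨z, h1, h2⟩ | ⟨z, h1, h2⟩
      · exact ⟨z, fun _ => Or.inl ⟨h1, h2⟩⟩
      · exact ⟨z, fun _ => Or.inr ⟨h1, h2⟩⟩
    · exact ⟨Classical.arbitrary V, fun h => absurd h hi⟩
  choose u hu using hraw
  have heven : ∀ i, i < n → i % 2 = 0 →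
      c.getVert i = .inr (F.connectedComponentMk (u i)) ∧
      c.getVert (i+1) = .inl (E.connectedComponentMk (u i)) := by
    intro i hi hpar
    rcases hu i hi with ⟨h1, h2⟩ | ⟨h1, h2⟩
    · exfalso
      have := (parity i (by omega)).mp ⟨_, h1⟩
      omega
    · exact ⟨h2, h1⟩
  have hodd : ∀ i, i < n → i % 2 = 1 →
      c.getVert i = .inl (E.connectedComponentMk (u i)) ∧
      c.getVert (i+1) = .inr (F.connectedComponentMk (u i)) := by
    intro i hi hpar
    rcases hu i hi with ⟨h1, h2⟩ | ⟨h1, h2⟩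
    · exact ⟨h1, h2⟩
    · exfalso
      have := (parity (i+1) (by omega)).mp ⟨_, h1⟩
      omega
  have injU : ∀ i j, i < n → j < n → u i = u j → i = j := by
    have mixed : ∀ i j, i < n → j < n → i % 2 = 0 → j % 2 = 1 → u i = u j → False := by
      intro i j hi hj hpi hpj huij
      have h1 : c.getVert (i+1) = c.getVert j := by
        rw [(heven i hi hpi).2, huij, ← (hodd j hj hpj).1]
      have h2 : c.getVert i = c.getVert (j+1) := by
        rw [(heven i hi hpi).1, huij, ← (hodd j hj hpj).2]
      rcases Nat.lt_or_ge (i+1) n with hi1 | hi1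
      · have e1 : i + 1 = j := injA _ _ hi1 hj h1
        rcases Nat.lt_or_ge (j+1) n with hj1 | hj1
        · have e2 : i = j + 1 := injA _ _ hi hj1 h2
          omega
        · have hjn : j + 1 = n := by omega
          have h2' : c.getVert i = c.getVert 0 := by
            rw [h2, hjn, an, a0]
          have := injA _ _ hi (by omega) h2'
          omega
      · omega
    intro i j hi hj huij
    rcases Nat.mod_two_eq_zero_or_one i with hpi | hpi <;>
      rcases Nat.mod_two_eq_zero_or_one j with hpj | hpj
    · apply injA _ _ hi hj
      rw [(heven i hi hpi).1, huij, ← (heven j hj hpj).1]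
    · exact absurd huij (fun h => mixed i j hi hj hpi hpj h)
    · exact absurd huij (fun h => (mixed j i hj hi hpj hpi h.symm))
    · apply injA _ _ hi hj
      rw [(hodd i hi hpi).1, huij, ← (hodd j hj hpj).1]
  have hEadj : ∀ k, k < s → E.Adj (u (2*k)) (u (2*k+1)) := by
    intro k hk
    have h1 := (heven (2*k) (by omega) (by omega)).2
    have h2 := (hodd (2*k+1) (by omega) (by omega)).1
    have hcomp : E.connectedComponentMk (u (2*k)) = E.connectedComponentMk (u (2*k+1)) := by
      have := h1.symm.trans h2
      exact Sum.inl.inj this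
    refine hE _ _ (ConnectedComponent.exact hcomp) ?_
    intro hcon
    have := injU _ _ (by omega) (by omega) hcon
    omega
  have hFadj : ∀ k, k < s → F.Adj (u (2*k+1)) (u ((2*k+2) % n)) := by
    intro k hk
    rcases Nat.lt_or_ge (k+1) s with hk1 | hk1
    · have hmod : (2*k+2) % n = 2*k+2 := Nat.mod_eq_of_lt (by omega)
      rw [hmod]
      have hne : u (2*k+1) ≠ u (2*k+2) := by
        intro hcon
        have := injU _ _ (by omega) (by omega) hcon
        omega
      have h1 := (hodd (2*k+1) (by omega) (by omega)).2
      have h2 := (heven (2*k+2) (by omega) (by omega)).1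
      have hcomp : F.connectedComponentMk (u (2*k+1)) = F.connectedComponentMk (u (2*k+2)) :=
        Sum.inr.inj (h1.symm.trans h2)
      exact hF _ _ (ConnectedComponent.exact hcomp) hne
    · have hkn : 2*k+2 = n := by omega
      have hmod : (2*k+2) % n = 0 := by rw [hkn, Nat.mod_self]
      rw [hmod]
      have hne : u (2*k+1) ≠ u 0 := by
        intro hcon
        have := injU _ _ (by omega) (by omega) hcon
        omega
      have h1 := (hodd (2*k+1) (by omega) (by omega)).2
      have h2 := (heven 0 (by omega) (by omega)).1
      rw [show 2*k+1+1 = n by omega, an] at h1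
      rw [a0] at h2
      have hcomp : F.connectedComponentMk (u (2*k+1)) = F.connectedComponentMk (u 0) :=
        Sum.inr.inj (h1.symm.trans h2)
      exact hF _ _ (ConnectedComponent.exact hcomp) hne
  refine ⟨s, hs, fun k => u (2*(k:ℕ)), fun k => u (2*(k:ℕ)+1), ?_, ?_, ?_⟩
  · rintro ⟨⟨k, hk⟩, b⟩ ⟨⟨l, hl⟩, b'⟩ hkl
    cases b <;> cases b' <;> simp only [if_true, if_false, Bool.false_eq_true] at hkl
    · have := injU _ _ (by omega) (by omega) hkl
      simp only [Prod.mk.injEq, Fin.mk.injEq]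
      exact ⟨by omega, trivial⟩
    · have := injU _ _ (by omega) (by omega) hkl
      exfalso
      omega
    · have := injU _ _ (by omega) (by omega) hkl
      exfalso
      omega
    · have := injU _ _ (by omega) (by omega) hkl
      simp only [Prod.mk.injEq, Fin.mk.injEq]
      exact ⟨by omega, trivial⟩
  · intro k
    exact hEadj k k.2
  · intro k
    have hidx : 2 * ((((k:ℕ) + 1) % s : ℕ)) = (2*(k:ℕ)+2) % n := by
      rcases Nat.lt_or_ge ((k:ℕ)+1) s with h | h
      · rw [Nat.mod_eq_of_lt h, Nat.mod_eq_of_lt (by omega)]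
        ring
      · have hks : (k:ℕ) + 1 = s := by have := k.2; omega
        rw [hks, Nat.mod_self, show 2*(k:ℕ)+2 = n by omega, Nat.mod_self]
    have := hFadj k k.2
    rw [← hidx] at this
    exact this

end extract

private lemma swap_SR {E F : SimpleGraph V} (h : HasSRCycle F E) : HasSRCycle E F := by
  obtain ⟨s, hs, v, w, inj, hFvw, hEwv⟩ := h
  have modinj : ∀ a b : ℕ, a < s → b < s → (a+1) % s = (b+1) % s → a = b := by
    intro a b ha hb hab
    rcases Nat.lt_or_ge (a+1) s with h1 | h1 <;> rcases Nat.lt_or_ge (b+1) s with h2 | h2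
    · rw [Nat.mod_eq_of_lt h1, Nat.mod_eq_of_lt h2] at hab; omega
    · rw [Nat.mod_eq_of_lt h1, show b+1 = s by omega, Nat.mod_self] at hab; omega
    · rw [Nat.mod_eq_of_lt h2, show a+1 = s by omega, Nat.mod_self] at hab; omega
    · omega
  refine ⟨s, hs, fun i => w i, fun i => v ⟨((i:ℕ)+1) % s, Nat.mod_lt _ (by omega)⟩, ?_, ?_, ?_⟩
  · rintro ⟨⟨k, hk⟩, b⟩ ⟨⟨l, hl⟩, b'⟩ hkl
    cases b <;> cases b' <;> simp only [if_true, if_false, Bool.false_eq_true] at hkl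
    · have := inj (a₁ := (⟨(k+1)%s, Nat.mod_lt _ (by omega)⟩, true))
        (a₂ := (⟨(l+1)%s, Nat.mod_lt _ (by omega)⟩, true)) (by simpa using hkl)
      simp only [Prod.mk.injEq, Fin.mk.injEq] at this ⊢
      exact ⟨modinj k l hk hl this.1, trivial⟩
    · have := inj (a₁ := (⟨(k+1)%s, Nat.mod_lt _ (by omega)⟩, true))
        (a₂ := (⟨l, hl⟩, false)) (by simpa using hkl)
      simp only [Prod.mk.injEq] at this
      exact absurd this.2 (by simp)
    · have := inj (a₁ := (⟨k, hk⟩, false))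
        (a₂ := (⟨(l+1)%s, Nat.mod_lt _ (by omega)⟩, true)) (by simpa using hkl)
      simp only [Prod.mk.injEq] at this
      exact absurd this.2 (by simp)
    · have := inj (a₁ := (⟨k, hk⟩, false)) (a₂ := (⟨l, hl⟩, false)) (by simpa using hkl)
      simpa using this
  · intro i
    exact hEwv i
  · intro i
    exact hFvw _

/-- The homomorphism from `BG E F` to `BG F E` given by swapping the two summands. -/
private def BGswap (E F : SimpleGraph V) : BG E F →g BG F E where
  toFun := Sum.swap
  map_rel' := by
    rintro x y (⟨u, h1, h2⟩ | ⟨u, h1, h2⟩) <;> subst h1 <;> subst h2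
    · exact Or.inr ⟨u, rfl, rfl⟩
    · exact Or.inl ⟨u, rfl, rfl⟩

end SRAux

/-- A connected SR-graph all of whose `F`-components are complete has an SR-cycle
if and only if `c(G) + c(H) < |V| + 1`. -/
theorem statement5 {V : Type u} [Fintype V] [Nonempty V]
    (E F : SimpleGraph V)
    (hdisj : ∀ v w : V, ¬(E.Adj v w ∧ F.Adj v w))
    (hE : ∀ v w : V, E.Reachable v w → v ≠ w → E.Adj v w)
    (hF : ∀ v w : V, F.Reachable v w → v ≠ w → F.Adj v w)
    (hconn : (E ⊔ F).Connected) :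
    HasSRCycle E F ↔
      Nat.card E.ConnectedComponent + Nat.card F.ConnectedComponent < Fintype.card V + 1 := by
  classical
  have hKcard : Nat.card (E.ConnectedComponent ⊕ F.ConnectedComponent) =
      Nat.card E.ConnectedComponent + Nat.card F.ConnectedComponent := Nat.card_sum
  have hedges : Nat.card (BG E F).edgeSet = Nat.card V := BG_card_edges hdisj hE hF
  have hV : Nat.card V = Fintype.card V := Nat.card_eq_fintype_card
  have hconnB : (BG E F).Connected := BG_connected hconn
  constructor
  · rintro ⟨s, hs, v, w, inj, hEvw, hFwv⟩
    set i0 : Fin s := ⟨0, by omega⟩ with hi0def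
    set e0 : Sym2 (E.ConnectedComponent ⊕ F.ConnectedComponent) :=
      s(.inl (E.connectedComponentMk (v i0)), .inr (F.connectedComponentMk (v i0))) with he0
    have hreach := fwd_reachable hdisj hE hF hs v w inj hEvw hFwv i0 rfl
    have hconn' : ((BG E F) \ fromEdgeSet {e0}).Connected :=
      connected_delete (BG E F) hconnB hreach
    have hle := card_le_of_connected _ hconn'
    -- compute the number of edges after deletion
    have he0mem : e0 ∈ (BG E F).edgeSet := BG_adj_base E F (v i0)
    have hset : ((BG E F) \ fromEdgeSet {e0}).edgeSet = (BG E F).edgeSet \ {e0} := by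
      rw [edgeSet_sdiff, edgeSet_fromEdgeSet]
      ext e
      simp only [Set.mem_diff, Set.mem_singleton_iff, Set.mem_setOf_eq, not_and, not_not]
      constructor
      · rintro ⟨hmem, himp⟩
        refine ⟨hmem, fun hek => ?_⟩
        have hd := himp hek
        rw [hek, he0] at hd
        simp at hd
      · rintro ⟨hmem, hne⟩
        exact ⟨hmem, fun hek => absurd hek hne⟩
    have hcard' : Nat.card ((BG E F) \ fromEdgeSet {e0}).edgeSet = Nat.card V - 1 := by
      rw [hset, Nat.card_coe_set_eq, Set.ncard_diff_singleton_of_mem he0mem,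
        ← Nat.card_coe_set_eq, hedges]
    have hpos : 1 ≤ Nat.card V := by
      rw [hV]
      exact Fintype.card_pos
    rw [hcard'] at hle
    omega
  · intro hcard
    have hnac : ¬ (BG E F).IsAcyclic := by
      intro hac
      have htree : (BG E F).IsTree := ⟨hconnB, hac⟩
      have := tree_card _ htree
      rw [hedges] at this
      omega
    simp only [IsAcyclic, not_forall, not_not] at hnac
    obtain ⟨x, c, hc⟩ := hnac
    rcases x with c₀ | c₀
    · -- starts at an `E`-component: swap the roles of `E` and `F`
      apply swap_SR
      have hinj : Function.Injective (BGswap E F) := fun a b h => by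
        have h2 : Sum.swap a = Sum.swap b := h
        simpa using congrArg Sum.swap h2
      have hc' : (Walk.map (BGswap E F) c).IsCycle :=
        (Walk.map_isCycle_iff_of_injective hinj).mpr hc
      exact extract_SR hF hE (c := Walk.map (BGswap E F) c) hc'
    · exact extract_SR hE hF hc
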